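/- Let n ≥ 1 and let M, N be nonzero n × n complex positive semidefinite matrices. Then M ∘ N ≥ (1 / min(rank(M), rank(N))) · d d* in the Loewner order, where d is the vector of diagonal entries of √M · √(conj(N)), √· denotes the (unique) positive semidefinite square root, and conj(N) is the entrywise complex conjugate of N (which is positive semidefinite). -/

import Mathlib

open Matrix ComplexOrder Complex Finset

/-- The positive semidefinite square root of a positive semidefinite matrix
(the definition `Matrix.PosSemidef.sqrt` of the older Mathlib, since removed). -/
noncomputable def Matrix.PosSemidef.sqrt {n 𝕜 : Type*} [Fintype n] [DecidableEq n] [RCLike 𝕜]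
    {A : Matrix n n 𝕜} (hA : A.PosSemidef) : Matrix n n 𝕜 :=
  hA.1.eigenvectorUnitary.1 * diagonal ((↑) ∘ (√·) ∘ hA.1.eigenvalues) *
  (star hA.1.eigenvectorUnitary : Matrix n n 𝕜)

lemma spec' {n 𝕜 : Type*} [Fintype n] [DecidableEq n] [RCLike 𝕜]
    {A : Matrix n n 𝕜} (hH : A.IsHermitian) :
    A = (hH.eigenvectorUnitary : Matrix n n 𝕜) * diagonal (RCLike.ofReal ∘ hH.eigenvalues) *
      star (hH.eigenvectorUnitary : Matrix n n 𝕜) := by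
  conv_lhs => rw [hH.spectral_theorem]
  exact Unitary.conjStarAlgAut_apply _ _

lemma Matrix.PosSemidef.posSemidef_sqrt {n 𝕜 : Type*} [Fintype n] [DecidableEq n] [RCLike 𝕜]
    {A : Matrix n n 𝕜} (hA : A.PosSemidef) : hA.sqrt.PosSemidef := by
  unfold Matrix.PosSemidef.sqrt
  have hD : (diagonal ((↑) ∘ (√·) ∘ hA.1.eigenvalues) : Matrix n n 𝕜).PosSemidef :=
    Matrix.PosSemidef.diagonal fun i => by
      simp only [Function.comp_apply, Pi.zero_apply]
      exact RCLike.ofReal_nonneg.mpr (Real.sqrt_nonneg _)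
  have := hD.mul_mul_conjTranspose_same (hA.1.eigenvectorUnitary : Matrix n n 𝕜)
  simpa [star_eq_conjTranspose] using this

lemma Matrix.PosSemidef.sqrt_mul_self {n 𝕜 : Type*} [Fintype n] [DecidableEq n] [RCLike 𝕜]
    {A : Matrix n n 𝕜} (hA : A.PosSemidef) : hA.sqrt * hA.sqrt = A := by
  unfold Matrix.PosSemidef.sqrt
  set U : Matrix n n 𝕜 := (hA.1.eigenvectorUnitary : Matrix n n 𝕜)
  have hUU : star U * U = 1 := Matrix.mem_unitaryGroup_iff'.mp hA.1.eigenvectorUnitary.2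
  conv_rhs => rw [spec' hA.1]
  calc U * diagonal ((↑) ∘ (√·) ∘ hA.1.eigenvalues) * star U *
        (U * diagonal ((↑) ∘ (√·) ∘ hA.1.eigenvalues) * star U)
      = U * (diagonal ((↑) ∘ (√·) ∘ hA.1.eigenvalues) * (star U * U) *
        diagonal ((↑) ∘ (√·) ∘ hA.1.eigenvalues)) * star U := by noncomm_ring
    _ = U * diagonal (RCLike.ofReal ∘ hA.1.eigenvalues) * star U := by
      rw [hUU, mul_one, diagonal_mul_diagonal]
      congr 3
      funext i
      show ((√(hA.1.eigenvalues i) : ℝ) : 𝕜) * ((√(hA.1.eigenvalues i) : ℝ) : 𝕜) =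
        ((hA.1.eigenvalues i : ℝ) : 𝕜)
      rw [← RCLike.ofReal_mul, Real.mul_self_sqrt (hA.eigenvalues_nonneg i)]

lemma cs_sum {ι : Type*} [Fintype ι] (f g : ι → ℂ) :
    ‖∑ i, (starRingEnd ℂ) (f i) * g i‖ ^ 2 ≤ (∑ i, ‖f i‖ ^ 2) * (∑ i, ‖g i‖ ^ 2) := by
  let x : EuclideanSpace ℂ ι := WithLp.toLp 2 f
  let y : EuclideanSpace ℂ ι := WithLp.toLp 2 g
  have h : ‖(inner ℂ x y : ℂ)‖ ≤ ‖x‖ * ‖y‖ := norm_inner_le_norm x y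
  have hinner : (inner ℂ x y : ℂ) = ∑ i, (starRingEnd ℂ) (f i) * g i := by
    simp [PiLp.inner_apply, RCLike.inner_apply, x, y]
    exact Finset.sum_congr rfl fun i _ => mul_comm _ _
  have hx : ‖x‖ ^ 2 = ∑ i, ‖f i‖ ^ 2 := by
    rw [EuclideanSpace.norm_eq, Real.sq_sqrt (by positivity)]
  have hy : ‖y‖ ^ 2 = ∑ i, ‖g i‖ ^ 2 := by
    rw [EuclideanSpace.norm_eq, Real.sq_sqrt (by positivity)]
  calc ‖∑ i, (starRingEnd ℂ) (f i) * g i‖ ^ 2 = ‖(inner ℂ x y : ℂ)‖ ^ 2 := by rw [hinner]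
    _ ≤ (‖x‖ * ‖y‖) ^ 2 := by nlinarith [norm_nonneg (inner ℂ x y : ℂ)]
    _ = (∑ i, ‖f i‖ ^ 2) * (∑ i, ‖g i‖ ^ 2) := by rw [mul_pow, hx, hy]

-- Frobenius norm² of a hermitian idempotent equals its trace (as real)

lemma proj_frob {n : ℕ} (P : Matrix (Fin n) (Fin n) ℂ) (hP : Pᴴ = P) (hPP : P * P = P) :
    (∑ r : Fin n, ∑ p : Fin n, ‖P r p‖ ^ 2 : ℝ) = P.trace.re := by
  have h1 : P.trace = ∑ r : Fin n, ∑ p : Fin n, ((‖P r p‖ : ℂ) ^ 2) := by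
    conv_lhs => rw [← hPP]
    rw [Matrix.trace]
    simp only [diag_apply, Matrix.mul_apply]
    rw [Finset.sum_comm]
    apply Finset.sum_congr rfl; intro r _
    apply Finset.sum_congr rfl; intro p _
    have h2 : P p r = (starRingEnd ℂ) (P r p) := by
      simpa [conjTranspose_apply] using (congrFun (congrFun hP p) r).symm
    rw [h2, ← Complex.normSq_eq_conj_mul_self, Complex.normSq_eq_norm_sq]
    push_cast
    rfl
  have h2 : P.trace = ((∑ r : Fin n, ∑ p : Fin n, ‖P r p‖ ^ 2 : ℝ) : ℂ) := by
    rw [h1]; push_cast; rfl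
  rw [h2, Complex.ofReal_re]

lemma trace_bound_left {n : ℕ} (P V : Matrix (Fin n) (Fin n) ℂ) (hP : Pᴴ = P)
    (hPP : P * P = P) (hPV : P * V = V) :
    ‖V.trace‖ ^ 2 ≤ P.trace.re * ∑ r : Fin n, ∑ p : Fin n, ‖V r p‖ ^ 2 := by
  have hherm : ∀ r p, (starRingEnd ℂ) (P r p) = P p r := by
    intro r p
    simpa [conjTranspose_apply] using congrFun (congrFun hP p) r
  have htr : V.trace = ∑ z : Fin n × Fin n, (starRingEnd ℂ) (P z.1 z.2) * V z.1 z.2 := by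
    conv_lhs => rw [← hPV]
    rw [Matrix.trace]
    simp only [diag_apply, Matrix.mul_apply]
    rw [Fintype.sum_prod_type]
    rw [Finset.sum_comm]
    apply Finset.sum_congr rfl; intro r _
    apply Finset.sum_congr rfl; intro p _
    rw [hherm]
  have := cs_sum (fun z : Fin n × Fin n => P z.1 z.2) (fun z : Fin n × Fin n => V z.1 z.2)
  rw [← htr] at this
  have hfr : (∑ z : Fin n × Fin n, ‖P z.1 z.2‖ ^ 2 : ℝ) = P.trace.re := by
    rw [Fintype.sum_prod_type]; exact proj_frob P hP hPP
  have hfv : (∑ z : Fin n × Fin n, ‖V z.1 z.2‖ ^ 2 : ℝ)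
      = ∑ r : Fin n, ∑ p : Fin n, ‖V r p‖ ^ 2 := Fintype.sum_prod_type _
  rw [hfr, hfv] at this
  exact this

lemma trace_bound_right {n : ℕ} (P V : Matrix (Fin n) (Fin n) ℂ) (hP : Pᴴ = P)
    (hPP : P * P = P) (hVP : V * P = V) :
    ‖V.trace‖ ^ 2 ≤ P.trace.re * ∑ r : Fin n, ∑ p : Fin n, ‖V r p‖ ^ 2 := by
  have hherm : ∀ r p, (starRingEnd ℂ) (P r p) = P p r := by
    intro r p
    simpa [conjTranspose_apply] using congrFun (congrFun hP p) r
  have htr : V.trace = ∑ z : Fin n × Fin n, (starRingEnd ℂ) (P z.1 z.2) * V z.1 z.2 := by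
    conv_lhs => rw [← hVP]
    rw [Matrix.trace]
    simp only [diag_apply, Matrix.mul_apply]
    rw [Fintype.sum_prod_type]
    apply Finset.sum_congr rfl; intro p _
    apply Finset.sum_congr rfl; intro r _
    rw [hherm]
    ring
  have := cs_sum (fun z : Fin n × Fin n => P z.1 z.2) (fun z : Fin n × Fin n => V z.1 z.2)
  rw [← htr] at this
  have hfr : (∑ z : Fin n × Fin n, ‖P z.1 z.2‖ ^ 2 : ℝ) = P.trace.re := by
    rw [Fintype.sum_prod_type]; exact proj_frob P hP hPP
  have hfv : (∑ z : Fin n × Fin n, ‖V z.1 z.2‖ ^ 2 : ℝ)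
      = ∑ r : Fin n, ∑ p : Fin n, ‖V r p‖ ^ 2 := Fintype.sum_prod_type _
  rw [hfr, hfv] at this
  exact this

lemma exists_proj {n : ℕ} {C : Matrix (Fin n) (Fin n) ℂ} (hC : C.PosSemidef) :
    ∃ P : Matrix (Fin n) (Fin n) ℂ, Pᴴ = P ∧ P * P = P ∧ C * P = C ∧ P * C = C ∧
      P.trace = (C.rank : ℂ) := by
  have hH := hC.1
  set U : Matrix (Fin n) (Fin n) ℂ := (hH.eigenvectorUnitary : Matrix (Fin n) (Fin n) ℂ) with hU
  have hUU : star U * U = 1 := Matrix.mem_unitaryGroup_iff'.mp hH.eigenvectorUnitary.2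
  set e : Fin n → ℂ := fun i => if hH.eigenvalues i = 0 then 0 else 1 with he
  set D : Matrix (Fin n) (Fin n) ℂ := diagonal e with hD
  have hee : (fun i => e i * e i) = e := by
    funext i; by_cases h : hH.eigenvalues i = 0 <;> simp [he, h]
  have heE : (fun i => (RCLike.ofReal ∘ hH.eigenvalues : Fin n → ℂ) i * e i)
      = (RCLike.ofReal ∘ hH.eigenvalues : Fin n → ℂ) := by
    funext i; by_cases h : hH.eigenvalues i = 0 <;> simp [he, h, Function.comp]
  have heE' : (fun i => e i * (RCLike.ofReal ∘ hH.eigenvalues : Fin n → ℂ) i)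
      = (RCLike.ofReal ∘ hH.eigenvalues : Fin n → ℂ) := by
    funext i; by_cases h : hH.eigenvalues i = 0 <;> simp [he, h, Function.comp]
  have hstar : (star e) = e := by
    funext i; by_cases h : hH.eigenvalues i = 0 <;> simp [he, h]
  refine ⟨U * D * star U, ?_, ?_, ?_, ?_, ?_⟩
  · have hDH : Dᴴ = D := by rw [hD, diagonal_conjTranspose, hstar]
    simp only [conjTranspose_mul, star_eq_conjTranspose, conjTranspose_conjTranspose, hDH,
      mul_assoc]
  · calc U * D * star U * (U * D * star U) = U * (D * (star U * U) * D) * star U := by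
          noncomm_ring
      _ = U * D * star U := by
          rw [hUU, mul_one, hD, diagonal_mul_diagonal, hee, mul_assoc]
  · conv_lhs => rw [spec' hH]
    conv_rhs => rw [spec' hH]
    calc U * diagonal (RCLike.ofReal ∘ hH.eigenvalues) * star U * (U * D * star U)
        = U * (diagonal (RCLike.ofReal ∘ hH.eigenvalues) * (star U * U) * D) * star U := by
          noncomm_ring
      _ = U * diagonal (RCLike.ofReal ∘ hH.eigenvalues) * star U := by
          rw [hUU, mul_one, hD, diagonal_mul_diagonal, heE, mul_assoc]
  · conv_lhs => rw [spec' hH]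
    conv_rhs => rw [spec' hH]
    calc U * D * star U * (U * diagonal (RCLike.ofReal ∘ hH.eigenvalues) * star U)
        = U * (D * (star U * U) * diagonal (RCLike.ofReal ∘ hH.eigenvalues)) * star U := by
          noncomm_ring
      _ = U * diagonal (RCLike.ofReal ∘ hH.eigenvalues) * star U := by
          rw [hUU, mul_one, hD, diagonal_mul_diagonal, heE', mul_assoc]
  · rw [Matrix.trace_mul_cycle, hUU, one_mul, hH.rank_eq_card_non_zero_eigs]
    rw [hD, trace_diagonal, Fintype.card_subtype]
    rw [← Finset.sum_boole]
    push_cast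
    apply Finset.sum_congr rfl
    intro i _
    by_cases h : hH.eigenvalues i = 0 <;> simp [he, h]

lemma rank_pos_of_ne_zero {n : ℕ} (M : Matrix (Fin n) (Fin n) ℂ) (h : M ≠ 0) : 0 < M.rank := by
  rcases (Nat.eq_zero_or_pos M.rank).symm with h1 | h1
  · exact h1
  exfalso
  apply h
  have hr : Module.finrank ℂ (LinearMap.range M.mulVecLin) = 0 := h1
  rw [Submodule.finrank_eq_zero, LinearMap.range_eq_bot] at hr
  ext i j
  have h2 : M *ᵥ Pi.single j 1 = 0 := by
    have := congrFun (congrArg DFunLike.coe hr) (Pi.single j 1)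
    simpa [Matrix.mulVecLin] using this
  have h3 := congrFun h2 i
  rw [Matrix.mulVec_single] at h3
  simpa using h3


theorem schur_product_lower_bound_sqrt_diag
    (n : ℕ) (hn : 1 ≤ n) (M N : Matrix (Fin n) (Fin n) ℂ)
    (hM : M.PosSemidef) (hN : N.PosSemidef) (hM0 : M ≠ 0) (hN0 : N ≠ 0)
    (hNc : (N.map (starRingEnd ℂ)).PosSemidef) :
    (M.hadamard N - ((min M.rank N.rank : ℕ) : ℂ)⁻¹ •
      vecMulVec (hM.sqrt * hNc.sqrt).diag
        (star (hM.sqrt * hNc.sqrt).diag)).PosSemidef := by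
  set A : Matrix (Fin n) (Fin n) ℂ := hM.sqrt with hAdef
  set B : Matrix (Fin n) (Fin n) ℂ := hNc.sqrt with hBdef
  have hA : A.PosSemidef := hM.posSemidef_sqrt
  have hB : B.PosSemidef := hNc.posSemidef_sqrt
  have hAA : A * A = M := hM.sqrt_mul_self
  have hBB : B * B = N.map (starRingEnd ℂ) := hNc.sqrt_mul_self
  have hAh : ∀ k p, (starRingEnd ℂ) (A k p) = A p k := by
    intro k p
    simpa [conjTranspose_apply] using congrFun (congrFun hA.1 p) k
  have hBh : ∀ k p, (starRingEnd ℂ) (B k p) = B p k := by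
    intro k p
    simpa [conjTranspose_apply] using congrFun (congrFun hB.1 p) k
  -- entry formulas
  have hMjk : ∀ j k, M j k = ∑ p, A j p * (starRingEnd ℂ) (A k p) := by
    intro j k
    rw [← hAA, Matrix.mul_apply]
    exact Finset.sum_congr rfl fun p _ => by rw [hAh]
  have hNjk : ∀ j k, N j k = ∑ q, (starRingEnd ℂ) (B j q) * B k q := by
    intro j k
    have h1 : (N.map (starRingEnd ℂ)) j k = ∑ q, B j q * B q k := by
      rw [← hBB, Matrix.mul_apply]
    have h2 : N j k = (starRingEnd ℂ) ((N.map (starRingEnd ℂ)) j k) := by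
      simp [Matrix.map_apply]
    rw [h2, h1, map_sum]
    exact Finset.sum_congr rfl fun q _ => by simp only [_root_.map_mul, hBh]
  -- ranks
  have hrA : A.rank = M.rank := by
    have h0 := Matrix.rank_conjTranspose_mul_self A
    rw [hA.1, hAA] at h0
    exact h0.symm
  have hrB : B.rank = N.rank := by
    have h1 := Matrix.rank_conjTranspose_mul_self B
    rw [hB.1, hBB] at h1
    have h2 : N.map (starRingEnd ℂ) = (Nᴴ)ᵀ := by
      ext i j; simp [conjTranspose_apply, Matrix.map_apply]
    rw [h2, Matrix.rank_transpose, Matrix.rank_conjTranspose] at h1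
    exact h1.symm
  have hcM : 0 < M.rank := rank_pos_of_ne_zero M hM0
  have hcN : 0 < N.rank := rank_pos_of_ne_zero N hN0
  set c : ℕ := min M.rank N.rank with hcdef
  have hc : 0 < c := lt_min hcM hcN
  -- projections
  obtain ⟨P, hP1, hP2, hP3, hP4, hP5⟩ := exists_proj hA
  obtain ⟨Q, hQ1, hQ2, hQ3, hQ4, hQ5⟩ := exists_proj hB
  set d : Fin n → ℂ := (A * B).diag with hddef
  have hdj : ∀ j, d j = ∑ p, A j p * (starRingEnd ℂ) (B j p) := by
    intro j
    rw [hddef]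
    simp only [diag_apply, Matrix.mul_apply]
    exact Finset.sum_congr rfl fun p _ => by rw [hBh]
  refine Matrix.PosSemidef.of_dotProduct_mulVec_nonneg ?_ ?_
  · -- Hermitian
    have hMh : ∀ j k, (starRingEnd ℂ) (M j k) = M k j := by
      intro j k
      simpa [conjTranspose_apply] using congrFun (congrFun hM.1 k) j
    have hNh : ∀ j k, (starRingEnd ℂ) (N j k) = N k j := by
      intro j k
      simpa [conjTranspose_apply] using congrFun (congrFun hN.1 k) j
    show _ = _
    ext i j
    simp only [conjTranspose_apply, Matrix.sub_apply, Matrix.smul_apply, hadamard_apply, vecMulVec_apply,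
      Pi.star_apply, smul_eq_mul, RCLike.star_def, map_sub, _root_.map_mul, map_inv₀,
      map_natCast, Complex.conj_conj]
    rw [hMh, hNh]
    ring
  · -- quadratic form
    intro x
    set V : Fin n → Fin n → ℂ :=
      fun p q => ∑ j, (starRingEnd ℂ) (x j) * (A j p * (starRingEnd ℂ) (B j q)) with hVdef
    set Vm : Matrix (Fin n) (Fin n) ℂ := Aᵀ * (diagonal (star x) * Bᵀ) with hVmdef
    have hVm : ∀ p q, Vm p q = V p q := by
      intro p q
      rw [hVmdef, Matrix.mul_apply]
      apply Finset.sum_congr rfl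
      intro j _
      rw [Matrix.diagonal_mul, transpose_apply, transpose_apply]
      rw [← hBh]
      simp only [Pi.star_apply, RCLike.star_def]
      ring
    set S : ℝ := ∑ p, ∑ q, ‖V p q‖ ^ 2 with hSdef
    set t : ℂ := ∑ j, (starRingEnd ℂ) (x j) * d j with htdef
    -- key1
    have key1 : star x ⬝ᵥ (M.hadamard N *ᵥ x) = ((S : ℝ) : ℂ) := by
      have lhs_eq : star x ⬝ᵥ (M.hadamard N *ᵥ x)
          = ∑ j, ∑ k, ∑ p, ∑ q,
              ((starRingEnd ℂ) (x j) * (A j p * (starRingEnd ℂ) (B j q))) *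
              (x k * ((starRingEnd ℂ) (A k p) * B k q)) := by
        simp only [dotProduct, mulVec, hadamard_apply, Pi.star_apply, RCLike.star_def]
        apply Finset.sum_congr rfl; intro j _
        rw [Finset.mul_sum]
        apply Finset.sum_congr rfl; intro k _
        have hmn : M j k * N j k = ∑ p, ∑ q,
            (A j p * (starRingEnd ℂ) (A k p)) * ((starRingEnd ℂ) (B j q) * B k q) := by
          rw [hMjk, hNjk, Finset.sum_mul_sum]
        rw [hmn]
        simp only [Finset.sum_mul, Finset.mul_sum]
        apply Finset.sum_congr rfl; intro p _
        apply Finset.sum_congr rfl; intro q _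
        ring
      have rhs_eq : ∑ p, ∑ q, V p q * (starRingEnd ℂ) (V p q)
          = ∑ p, ∑ q, ∑ j, ∑ k,
              ((starRingEnd ℂ) (x j) * (A j p * (starRingEnd ℂ) (B j q))) *
              (x k * ((starRingEnd ℂ) (A k p) * B k q)) := by
        apply Finset.sum_congr rfl; intro p _
        apply Finset.sum_congr rfl; intro q _
        have hconj : (starRingEnd ℂ) (V p q)
            = ∑ k, x k * ((starRingEnd ℂ) (A k p) * B k q) := by
          rw [hVdef, map_sum]
          apply Finset.sum_congr rfl; intro k _
          simp only [_root_.map_mul, Complex.conj_conj]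
        rw [hconj, hVdef, Finset.sum_mul_sum]
      have swap : ∀ (f : Fin n → Fin n → Fin n → Fin n → ℂ),
          ∑ j, ∑ k, ∑ p, ∑ q, f j k p q = ∑ p, ∑ q, ∑ j, ∑ k, f j k p q := by
        intro f
        calc ∑ j, ∑ k, ∑ p, ∑ q, f j k p q
            = ∑ j, ∑ p, ∑ k, ∑ q, f j k p q :=
              Finset.sum_congr rfl fun j _ => Finset.sum_comm
          _ = ∑ p, ∑ j, ∑ k, ∑ q, f j k p q := Finset.sum_comm
          _ = ∑ p, ∑ j, ∑ q, ∑ k, f j k p q :=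
              Finset.sum_congr rfl fun p _ =>
                Finset.sum_congr rfl fun j _ => Finset.sum_comm
          _ = ∑ p, ∑ q, ∑ j, ∑ k, f j k p q :=
              Finset.sum_congr rfl fun p _ => Finset.sum_comm
      have hcast : ∑ p, ∑ q, V p q * (starRingEnd ℂ) (V p q) = ((S : ℝ) : ℂ) := by
        rw [hSdef]
        push_cast
        apply Finset.sum_congr rfl; intro p _
        apply Finset.sum_congr rfl; intro q _
        rw [Complex.mul_conj, Complex.normSq_eq_norm_sq]
        push_cast
        rfl
      rw [lhs_eq, swap, ← rhs_eq, hcast]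
      
    -- key2
    have key2 : star x ⬝ᵥ ((vecMulVec d (star d)) *ᵥ x) = ((‖t‖ ^ 2 : ℝ) : ℂ) := by
      have hconjt : (starRingEnd ℂ) t = ∑ k, x k * (starRingEnd ℂ) (d k) := by
        rw [htdef, map_sum]
        apply Finset.sum_congr rfl; intro k _
        simp only [_root_.map_mul, Complex.conj_conj]
      have h1 : star x ⬝ᵥ ((vecMulVec d (star d)) *ᵥ x) = t * (starRingEnd ℂ) t := by
        rw [htdef, hconjt, Finset.sum_mul_sum]
        simp only [dotProduct, mulVec, vecMulVec_apply, Pi.star_apply, RCLike.star_def,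
          Finset.mul_sum]
        apply Finset.sum_congr rfl; intro j _
        apply Finset.sum_congr rfl; intro k _
        ring
      rw [h1, Complex.mul_conj, Complex.normSq_eq_norm_sq]
    -- trace of Vm equals t
    have htrace : Vm.trace = t := by
      rw [Matrix.trace]
      have : ∀ p, Vm.diag p = V p p := fun p => hVm p p
      simp only [diag_apply]
      calc ∑ p, Vm p p = ∑ p, V p p := Finset.sum_congr rfl fun p _ => hVm p p
        _ = ∑ p, ∑ j, (starRingEnd ℂ) (x j) * (A j p * (starRingEnd ℂ) (B j p)) := rfl
        _ = ∑ j, ∑ p, (starRingEnd ℂ) (x j) * (A j p * (starRingEnd ℂ) (B j p)) :=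
            Finset.sum_comm
        _ = t := by
            rw [htdef]
            apply Finset.sum_congr rfl; intro j _
            rw [hdj, Finset.mul_sum]
    -- sums of ‖Vm‖² equal S
    have hSm : (∑ r : Fin n, ∑ p : Fin n, ‖Vm r p‖ ^ 2 : ℝ) = S := by
      rw [hSdef]
      exact Finset.sum_congr rfl fun r _ => Finset.sum_congr rfl fun p _ => by rw [hVm]
    -- bound via left projection
    have hboundM : ‖t‖ ^ 2 ≤ (M.rank : ℝ) * S := by
      have hPt1 : (Pᵀ)ᴴ = Pᵀ := by
        ext i j
        simp only [conjTranspose_apply, transpose_apply, RCLike.star_def]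
        simpa [conjTranspose_apply] using congrFun (congrFun hP1 j) i
      have hPt2 : Pᵀ * Pᵀ = Pᵀ := by rw [← transpose_mul, hP2]
      have hPV : Pᵀ * Vm = Vm := by
        rw [hVmdef, ← mul_assoc, ← transpose_mul, hP3]
      have hb := trace_bound_left Pᵀ Vm hPt1 hPt2 hPV
      rw [htrace, hSm] at hb
      have htp : (Pᵀ).trace.re = (M.rank : ℝ) := by
        rw [Matrix.trace_transpose, hP5, hrA]
        simp
      rwa [htp] at hb
    -- bound via right projection
    have hboundN : ‖t‖ ^ 2 ≤ (N.rank : ℝ) * S := by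
      have hQt1 : (Qᵀ)ᴴ = Qᵀ := by
        ext i j
        simp only [conjTranspose_apply, transpose_apply, RCLike.star_def]
        simpa [conjTranspose_apply] using congrFun (congrFun hQ1 j) i
      have hQt2 : Qᵀ * Qᵀ = Qᵀ := by rw [← transpose_mul, hQ2]
      have hVQ : Vm * Qᵀ = Vm := by
        rw [hVmdef, mul_assoc, mul_assoc, ← transpose_mul, hQ4]
      have hb := trace_bound_right Qᵀ Vm hQt1 hQt2 hVQ
      rw [htrace, hSm] at hb
      have htq : (Qᵀ).trace.re = (N.rank : ℝ) := by
        rw [Matrix.trace_transpose, hQ5, hrB]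
        simp
      rwa [htq] at hb
    have hS0 : 0 ≤ S := by
      rw [hSdef]
      positivity
    have hbound : ‖t‖ ^ 2 ≤ (c : ℝ) * S := by
      rcases le_total M.rank N.rank with h | h
      · rw [hcdef, min_eq_left h]; exact hboundM
      · rw [hcdef, min_eq_right h]; exact hboundN
    -- final assembly
    rw [sub_mulVec, dotProduct_sub, smul_mulVec, dotProduct_smul, key1, key2,
      smul_eq_mul]
    have hre : ((S : ℝ) : ℂ) - ((c : ℕ) : ℂ)⁻¹ * ((‖t‖ ^ 2 : ℝ) : ℂ)
        = (((S - (c : ℝ)⁻¹ * ‖t‖ ^ 2 : ℝ)) : ℂ) := by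
      push_cast
      ring
    rw [hre, Complex.zero_le_real]
    have hcR : (0 : ℝ) < (c : ℝ) := by exact_mod_cast hc
    have h1 : (c : ℝ)⁻¹ * ‖t‖ ^ 2 ≤ (c : ℝ)⁻¹ * ((c : ℝ) * S) :=
      mul_le_mul_of_nonneg_left hbound (by positivity)
    rw [← mul_assoc, inv_mul_cancel₀ (ne_of_gt hcR), one_mul] at h1
    linarith
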